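/- Let γ_L = 3, κ > 0, ν = 3a + b with 0 ≤ b < 3 and ν < κ. The balanced protograph matrix B_B (a 3 × κ binary matrix obtained by concatenating an all-ones 3 × (κ−ν) block, the matrix S(3,b), and the blocks Q(3,a;2), Q(3,a;1), Q(3,a;0)) has pairwise row overlap parameters t_{0,1} = κ−2a−b, t_{0,2} = κ−2a−[b>0], t_{1,2} = κ−2a−[b>1], and triple overlap t_{0,1,2} = κ−ν, where [P] = 1 if P holds and 0 otherwise. -/
import Mathlib

private def FBB (κ a b i j : ℕ) : ℕ :=
  if j < κ - (3 * a + b) then 1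
  else if j < κ - (3 * a + b) + b then (if i = b - (j - (κ - (3 * a + b))) - 1 then 0 else 1)
  else if j < κ - (3 * a + b) + b + a then (if i = 2 then 0 else 1)
  else if j < κ - (3 * a + b) + b + 2 * a then (if i = 1 then 0 else 1)
  else (if i = 0 then 0 else 1)

private lemma fbb01 (κ a b : ℕ) (hb : b < 3) (hν : 3 * a + b < κ) :
    ((Finset.range κ).filter (fun j => FBB κ a b 0 j = 1 ∧ FBB κ a b 1 j = 1)).card
      = κ - 2 * a - b := by
  have key : ((Finset.range κ).filter (fun j => FBB κ a b 0 j = 1 ∧ FBB κ a b 1 j = 1))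
      = Finset.Ico 0 (κ - (3 * a + b))
        ∪ Finset.Ico (κ - (3 * a + b) + b) (κ - (3 * a + b) + b + a) := by
    ext j
    simp only [Finset.mem_filter, Finset.mem_range, Finset.mem_union, Finset.mem_Ico, FBB]
    split_ifs <;>
      first
        | exact absurd rfl (by assumption)
        | exact (by assumption : False).elim
        | omega
        | (simp only [false_and, and_false, true_and, and_true, false_iff, iff_false, not_or,
            not_lt, not_le]; omega)
  have hd : Disjoint (Finset.Ico 0 (κ - (3 * a + b)))
      (Finset.Ico (κ - (3 * a + b) + b) (κ - (3 * a + b) + b + a)) := by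
    rw [Finset.disjoint_left]; intro x; simp; omega
  rw [key, Finset.card_union_of_disjoint hd, Nat.card_Ico, Nat.card_Ico]
  omega

private lemma fbb02 (κ a b : ℕ) (hb : b < 3) (hν : 3 * a + b < κ) :
    ((Finset.range κ).filter (fun j => FBB κ a b 0 j = 1 ∧ FBB κ a b 2 j = 1)).card
      = κ - 2 * a - (if 0 < b then 1 else 0) := by
  have key : ((Finset.range κ).filter (fun j => FBB κ a b 0 j = 1 ∧ FBB κ a b 2 j = 1))
      = Finset.Ico 0 (κ - (3 * a + b) + (b - 1))
        ∪ Finset.Ico (κ - (3 * a + b) + b + a) (κ - (3 * a + b) + b + 2 * a) := by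
    ext j
    simp only [Finset.mem_filter, Finset.mem_range, Finset.mem_union, Finset.mem_Ico, FBB]
    split_ifs <;>
      first
        | exact absurd rfl (by assumption)
        | exact (by assumption : False).elim
        | omega
        | (simp only [false_and, and_false, true_and, and_true, false_iff, iff_false, not_or,
            not_lt, not_le]; omega)
  have hd : Disjoint (Finset.Ico 0 (κ - (3 * a + b) + (b - 1)))
      (Finset.Ico (κ - (3 * a + b) + b + a) (κ - (3 * a + b) + b + 2 * a)) := by
    rw [Finset.disjoint_left]; intro x; simp; omega
  rw [key, Finset.card_union_of_disjoint hd, Nat.card_Ico, Nat.card_Ico]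
  split_ifs <;> omega

private lemma fbb12 (κ a b : ℕ) (hb : b < 3) (hν : 3 * a + b < κ) :
    ((Finset.range κ).filter (fun j => FBB κ a b 1 j = 1 ∧ FBB κ a b 2 j = 1)).card
      = κ - 2 * a - (if 1 < b then 1 else 0) := by
  have key : ((Finset.range κ).filter (fun j => FBB κ a b 1 j = 1 ∧ FBB κ a b 2 j = 1))
      = (Finset.Ico 0 (κ - (3 * a + b))
          ∪ Finset.Ico (κ - (3 * a + b) + (b - 1)) (κ - (3 * a + b) + b))
        ∪ Finset.Ico (κ - (3 * a + b) + b + 2 * a) (κ - (3 * a + b) + b + 3 * a) := by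
    ext j
    simp only [Finset.mem_filter, Finset.mem_range, Finset.mem_union, Finset.mem_Ico, FBB]
    split_ifs <;>
      first
        | exact absurd rfl (by assumption)
        | exact (by assumption : False).elim
        | omega
        | (simp only [false_and, and_false, true_and, and_true, false_iff, iff_false, not_or,
            not_lt, not_le]; omega)
  have hd' : Disjoint (Finset.Ico 0 (κ - (3 * a + b)))
      (Finset.Ico (κ - (3 * a + b) + (b - 1)) (κ - (3 * a + b) + b)) := by
    rw [Finset.disjoint_left]; intro x; simp; omega
  have hd : Disjoint (Finset.Ico 0 (κ - (3 * a + b))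
        ∪ Finset.Ico (κ - (3 * a + b) + (b - 1)) (κ - (3 * a + b) + b))
      (Finset.Ico (κ - (3 * a + b) + b + 2 * a) (κ - (3 * a + b) + b + 3 * a)) := by
    rw [Finset.disjoint_left]; intro x; simp; omega
  rw [key, Finset.card_union_of_disjoint hd, Finset.card_union_of_disjoint hd',
    Nat.card_Ico, Nat.card_Ico, Nat.card_Ico]
  split_ifs <;> omega

private lemma fbb012 (κ a b : ℕ) (hb : b < 3) (hν : 3 * a + b < κ) :
    ((Finset.range κ).filter
        (fun j => FBB κ a b 0 j = 1 ∧ FBB κ a b 1 j = 1 ∧ FBB κ a b 2 j = 1)).card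
      = κ - (3 * a + b) := by
  have key : ((Finset.range κ).filter
        (fun j => FBB κ a b 0 j = 1 ∧ FBB κ a b 1 j = 1 ∧ FBB κ a b 2 j = 1))
      = Finset.Ico 0 (κ - (3 * a + b)) := by
    ext j
    simp only [Finset.mem_filter, Finset.mem_range, Finset.mem_Ico, FBB]
    split_ifs <;>
      first
        | exact absurd rfl (by assumption)
        | exact (by assumption : False).elim
        | omega
        | (simp only [false_and, and_false, true_and, and_true, false_iff, iff_false, not_or,
            not_lt, not_le]; omega)
  rw [key, Nat.card_Ico]
  omega

theorem stmt_3 (κ a b : ℕ) (hκ : 0 < κ) (hb : b < 3) (hν : 3 * a + b < κ) :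
    let ν := 3 * a + b
    -- balanced matrix: all-ones block, then S(3,b), then Q(3,a;2), Q(3,a;1), Q(3,a;0)
    let BB : ℕ → ℕ → ℕ := fun i j =>
      if j < κ - ν then 1
      else if j < κ - ν + b then (if i = b - (j - (κ - ν)) - 1 then 0 else 1)
      else if j < κ - ν + b + a then (if i = 2 then 0 else 1)
      else if j < κ - ν + b + 2 * a then (if i = 1 then 0 else 1)
      else (if i = 0 then 0 else 1)
    let t2 : ℕ → ℕ → ℕ := fun i₁ i₂ =>
      ((Finset.range κ).filter (fun j => BB i₁ j = 1 ∧ BB i₂ j = 1)).card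
    let t3 : ℕ :=
      ((Finset.range κ).filter (fun j => BB 0 j = 1 ∧ BB 1 j = 1 ∧ BB 2 j = 1)).card
    t2 0 1 = κ - 2 * a - b ∧
    t2 0 2 = κ - 2 * a - (if 0 < b then 1 else 0) ∧
    t2 1 2 = κ - 2 * a - (if 1 < b then 1 else 0) ∧
    t3 = κ - ν := by
  intro ν BB t2 t3
  have hBB : BB = FBB κ a b := rfl
  refine ⟨?_, ?_, ?_, ?_⟩
  · show ((Finset.range κ).filter (fun j => BB 0 j = 1 ∧ BB 1 j = 1)).card = κ - 2 * a - b
    rw [hBB]; exact fbb01 κ a b hb hν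
  · show ((Finset.range κ).filter (fun j => BB 0 j = 1 ∧ BB 2 j = 1)).card
        = κ - 2 * a - (if 0 < b then 1 else 0)
    rw [hBB]; exact fbb02 κ a b hb hν
  · show ((Finset.range κ).filter (fun j => BB 1 j = 1 ∧ BB 2 j = 1)).card
        = κ - 2 * a - (if 1 < b then 1 else 0)
    rw [hBB]; exact fbb12 κ a b hb hν
  · show ((Finset.range κ).filter (fun j => BB 0 j = 1 ∧ BB 1 j = 1 ∧ BB 2 j = 1)).card
        = κ - ν
    rw [hBB]; exact fbb012 κ a b hb hν
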